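/- CDF bounds under c-dependence. Assume overlap and either marginal c-dependence or joint c-dependence with bounds c̲, c̄. Then for every y ∈ ℝ: F̲₁(y) ≤ P(Y₁ ≤ y) ≤ F̄₁(y) and F̲₀(y) ≤ P(Y₀ ≤ y) ≤ F̄₀(y). -/

import Mathlib

open MeasureTheory ProbabilityTheory Set Filter Function

noncomputable section

lemma condexp_indicator_bound {Ω : Type*} (m : MeasurableSpace Ω) [mΩ : MeasurableSpace Ω]
    (hm : m ≤ mΩ) (P : Measure Ω)
    [IsProbabilityMeasure P] (X : Ω → Bool) (hX : Measurable X) (cl cu : ℝ)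
    (he : ∀ᵐ ω ∂P, (P[(fun ω => if X ω then (1:ℝ) else 0) | m]) ω ∈ Set.Icc cl cu)
    (A : Set Ω) (hA : MeasurableSet[m] A) :
    cl * (P A).toReal ≤ (P (A ∩ {ω | X ω = true})).toReal ∧
      (P (A ∩ {ω | X ω = true})).toReal ≤ cu * (P A).toReal := by
  set f : Ω → ℝ := fun ω => if X ω then (1:ℝ) else 0 with hfdef
  have hS : MeasurableSet {ω | X ω = true} := hX (measurableSet_singleton true)
  have hfi : f = Set.indicator {ω | X ω = true} (fun _ => (1:ℝ)) := by
    funext ω; by_cases h : X ω <;> simp [hfdef, Set.indicator_apply, h]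
  have hf : Integrable f P := by rw [hfi]; exact (integrable_const 1).indicator hS
  have hint : ∫ ω in A, f ω ∂P = (P (A ∩ {ω | X ω = true})).toReal := by
    rw [hfi, setIntegral_indicator hS, setIntegral_const, smul_eq_mul, mul_one]
    rfl
  have h1 : ∫ ω in A, (P[f | m]) ω ∂P = ∫ ω in A, f ω ∂P := setIntegral_condExp hm hf hA
  have hlo : ∫ ω in A, (fun _ => cl) ω ∂P ≤ ∫ ω in A, (P[f | m]) ω ∂P :=
    setIntegral_mono_ae (integrable_const cl).integrableOn integrable_condExp.integrableOn
      (he.mono fun ω h => h.1)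
  have hhi : ∫ ω in A, (P[f | m]) ω ∂P ≤ ∫ ω in A, (fun _ => cu) ω ∂P :=
    setIntegral_mono_ae integrable_condExp.integrableOn (integrable_const cu).integrableOn
      (he.mono fun ω h => h.2)
  rw [setIntegral_const, smul_eq_mul] at hlo
  rw [setIntegral_const, smul_eq_mul] at hhi
  rw [h1, hint] at hlo hhi
  constructor
  · rw [mul_comm]; exact hlo
  · rw [mul_comm]; exact hhi

lemma real_bounds (a b p c d : ℝ) (hc : 0 < c) (hd : 0 < d)
    (h1 : c * a ≤ b) (h2 : b ≤ d * a) (h3 : c * (1 - a) ≤ p - b) (h4 : p - b ≤ d * (1 - a)) :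
    max (b / d) ((c - p) / c + b / c) ≤ a ∧ a ≤ min (b / c) ((d - p) / d + b / d) := by
  constructor
  · apply max_le
    · rw [div_le_iff₀ hd]; linarith
    · rw [← add_div, div_le_iff₀ hc]; linarith
  · apply le_min
    · rw [le_div_iff₀ hc]; linarith
    · rw [← add_div, le_div_iff₀ hd]; linarith

/-- **CDF bounds under c-dependence.**
Under overlap and either marginal or joint c-dependence with bounds `c̲, c̄`, the cdf of each
potential outcome is bounded by the explicit bound functions: for all `y`,
`F̲₁(y) ≤ P(Y₁ ≤ y) ≤ F̄₁(y)` and `F̲₀(y) ≤ P(Y₀ ≤ y) ≤ F̄₀(y)`. -/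
theorem cdf_bounds_under_c_dependence
    {Ω : Type*} [MeasurableSpace Ω] (P : Measure Ω) [IsProbabilityMeasure P]
    (Y1 Y0 : Ω → ℝ) (X : Ω → Bool)
    (hY1 : Measurable Y1) (hY0 : Measurable Y0) (hX : Measurable X)
    (Y : Ω → ℝ) (hY : ∀ ω, Y ω = if X ω then Y1 ω else Y0 ω)
    (p1 p0 : ℝ) (hp1 : p1 = (P {ω | X ω = true}).toReal) (hp0 : p0 = 1 - p1)
    (hov : 0 < p1 ∧ p1 < 1)
    (cl cu : ℝ) (hcl : 0 < cl) (hclp1 : cl ≤ p1) (hp1cu : p1 ≤ cu) (hcu : cu < 1)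
    (G1 G0 : ℝ → ℝ)
    (hG1 : ∀ y, G1 y = (P {ω | Y ω ≤ y ∧ X ω = true}).toReal / p1)
    (hG0 : ∀ y, G0 y = (P {ω | Y ω ≤ y ∧ X ω = false}).toReal / p0)
    (Fu1 Fl1 Fu0 Fl0 : ℝ → ℝ)
    (hFu1 : ∀ y, Fu1 y = min (G1 y * p1 / cl) ((cu - p1) / cu + G1 y * p1 / cu))
    (hFl1 : ∀ y, Fl1 y = max (G1 y * p1 / cu) ((cl - p1) / cl + G1 y * p1 / cl))
    (hFu0 : ∀ y, Fu0 y = min (G0 y * p0 / (1 - cu)) ((p1 - cl) / (1 - cl) + G0 y * p0 / (1 - cl)))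
    (hFl0 : ∀ y, Fl0 y = max (G0 y * p0 / (1 - cl)) ((p1 - cu) / (1 - cu) + G0 y * p0 / (1 - cu)))
    (hdep :
      ((∀ᵐ ω ∂P, (P[(fun ω => if X ω then (1:ℝ) else 0) |
          MeasurableSpace.comap Y1 inferInstance]) ω ∈ Set.Icc cl cu) ∧
       (∀ᵐ ω ∂P, (P[(fun ω => if X ω then (1:ℝ) else 0) |
          MeasurableSpace.comap Y0 inferInstance]) ω ∈ Set.Icc cl cu))
      ∨
      (∀ᵐ ω ∂P, (P[(fun ω => if X ω then (1:ℝ) else 0) |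
          MeasurableSpace.comap (fun ω => (Y1 ω, Y0 ω)) inferInstance]) ω ∈ Set.Icc cl cu)) :
    ∀ y : ℝ,
      (Fl1 y ≤ (P {ω | Y1 ω ≤ y}).toReal ∧ (P {ω | Y1 ω ≤ y}).toReal ≤ Fu1 y) ∧
      (Fl0 y ≤ (P {ω | Y0 ω ≤ y}).toReal ∧ (P {ω | Y0 ω ≤ y}).toReal ≤ Fu0 y) := by
  intro y
  have hcu0 : 0 < cu := lt_of_lt_of_le hcl (hclp1.trans hp1cu)
  have h1cl : 0 < 1 - cl := by linarith
  have h1cu : 0 < 1 - cu := by linarith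
  have hp0pos : 0 < p0 := by rw [hp0]; linarith [hov.2]
  set S : Set Ω := {ω | X ω = true} with hSdef
  have hS : MeasurableSet S := hX (measurableSet_singleton true)
  set A1 : Set Ω := {ω | Y1 ω ≤ y} with hA1def
  set A0 : Set Ω := {ω | Y0 ω ≤ y} with hA0def
  have hA1 : MeasurableSet A1 := hY1 measurableSet_Iic
  have hA0 : MeasurableSet A0 := hY0 measurableSet_Iic
  -- measurability in the comap σ-algebras
  have hA1m : MeasurableSet[MeasurableSpace.comap Y1 inferInstance] A1 :=
    ⟨Iic y, measurableSet_Iic, rfl⟩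
  have hA0m : MeasurableSet[MeasurableSpace.comap Y0 inferInstance] A0 :=
    ⟨Iic y, measurableSet_Iic, rfl⟩
  have hA1j : MeasurableSet[MeasurableSpace.comap (fun ω => (Y1 ω, Y0 ω)) inferInstance] A1 :=
    ⟨Iic y ×ˢ univ, measurableSet_Iic.prod MeasurableSet.univ, by ext ω; simp [hA1def]⟩
  have hA0j : MeasurableSet[MeasurableSpace.comap (fun ω => (Y1 ω, Y0 ω)) inferInstance] A0 :=
    ⟨univ ×ˢ Iic y, MeasurableSet.univ.prod measurableSet_Iic, by ext ω; simp [hA0def]⟩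
  -- key inequalities from the conditional-expectation bound
  have K : ∀ A : Set Ω,
      (MeasurableSet[MeasurableSpace.comap Y1 inferInstance] A ∨
        MeasurableSet[MeasurableSpace.comap Y0 inferInstance] A) →
      MeasurableSet[MeasurableSpace.comap (fun ω => (Y1 ω, Y0 ω)) inferInstance] A →
      cl * (P A).toReal ≤ (P (A ∩ S)).toReal ∧ (P (A ∩ S)).toReal ≤ cu * (P A).toReal := by
    intro A hmarg hjoint
    rcases hdep with ⟨hm1, hm0⟩ | hj
    · rcases hmarg with hA' | hA'
      · exact condexp_indicator_bound _ hY1.comap_le P X hX cl cu hm1 A hA'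
      · exact condexp_indicator_bound _ hY0.comap_le P X hX cl cu hm0 A hA'
    · exact condexp_indicator_bound _ ((hY1.prodMk hY0).comap_le) P X hX cl cu hj A hjoint
  obtain ⟨k1l, k1u⟩ := K A1 (Or.inl hA1m) hA1j
  obtain ⟨k1cl, k1cu⟩ := K A1ᶜ (Or.inl hA1m.compl) hA1j.compl
  obtain ⟨k0l, k0u⟩ := K A0 (Or.inr hA0m) hA0j
  obtain ⟨k0cl, k0cu⟩ := K A0ᶜ (Or.inr hA0m.compl) hA0j.compl
  -- toReal arithmetic
  have toReal_of_add : ∀ {u v : Set Ω} {w : ENNReal}, P u + P v = w →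
      (P u).toReal + (P v).toReal = w.toReal := by
    intro u v w h
    rw [← h, ENNReal.toReal_add (measure_ne_top P u) (measure_ne_top P v)]
  have e1 : (P A1).toReal + (P A1ᶜ).toReal = 1 := by
    simpa using toReal_of_add (measure_add_measure_compl hA1)
  have e4 : (P A0).toReal + (P A0ᶜ).toReal = 1 := by
    simpa using toReal_of_add (measure_add_measure_compl hA0)
  have eS : (P S).toReal + (P Sᶜ).toReal = 1 := by
    simpa using toReal_of_add (measure_add_measure_compl hS)
  have hSc : (P Sᶜ).toReal = p0 := by rw [hp0, hp1]; linarith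
  have e2 : (P (A1 ∩ S)).toReal + (P (A1ᶜ ∩ S)).toReal = p1 := by
    have h2 := toReal_of_add (measure_inter_add_diff S hA1)
    rw [Set.diff_eq, Set.inter_comm S A1, Set.inter_comm S A1ᶜ] at h2
    rw [hp1]; exact h2
  have e3 : (P (A0 ∩ S)).toReal + (P (A0 ∩ Sᶜ)).toReal = (P A0).toReal := by
    have h2 := toReal_of_add (measure_inter_add_diff A0 hS)
    rwa [Set.diff_eq] at h2
  have e5 : (P (A0ᶜ ∩ S)).toReal + (P (A0ᶜ ∩ Sᶜ)).toReal = (P A0ᶜ).toReal := by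
    have h2 := toReal_of_add (measure_inter_add_diff A0ᶜ hS)
    rwa [Set.diff_eq] at h2
  have e6 : (P (A0 ∩ Sᶜ)).toReal + (P (A0ᶜ ∩ Sᶜ)).toReal = p0 := by
    have h2 := toReal_of_add (measure_inter_add_diff Sᶜ hA0)
    rw [Set.diff_eq, Set.inter_comm Sᶜ A0, Set.inter_comm Sᶜ A0ᶜ] at h2
    rw [← hSc]; exact h2
  -- identify G · p with the measures of intersections
  have hsets1 : {ω | Y ω ≤ y ∧ X ω = true} = A1 ∩ S := by
    ext ω
    simp only [hA1def, hSdef, Set.mem_setOf_eq, Set.mem_inter_iff, hY]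
    rcases Bool.dichotomy (X ω) with h | h <;> simp [h]
  have hsets0 : {ω | Y ω ≤ y ∧ X ω = false} = A0 ∩ Sᶜ := by
    ext ω
    simp only [hA0def, hSdef, Set.mem_setOf_eq, Set.mem_inter_iff, Set.mem_compl_iff, hY]
    rcases Bool.dichotomy (X ω) with h | h <;> simp [h]
  have hb1 : G1 y * p1 = (P (A1 ∩ S)).toReal := by
    rw [hG1 y, div_mul_cancel₀ _ (ne_of_gt hov.1), hsets1]
  have hb0 : G0 y * p0 = (P (A0 ∩ Sᶜ)).toReal := by
    rw [hG0 y, div_mul_cancel₀ _ (ne_of_gt hp0pos), hsets0]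
  have ec1 : (P A1ᶜ).toReal = 1 - (P A1).toReal := by linarith
  have ec0 : (P A0ᶜ).toReal = 1 - (P A0).toReal := by linarith
  rw [ec1] at k1cl k1cu
  rw [ec0] at k0cl k0cu e5
  -- treatment 1
  obtain ⟨L1, U1⟩ := real_bounds ((P A1).toReal) (G1 y * p1) p1 cl cu hcl hcu0
    (by rw [hb1]; exact k1l) (by rw [hb1]; exact k1u)
    (by rw [hb1]; linarith) (by rw [hb1]; linarith)
  -- treatment 0
  obtain ⟨L0, U0⟩ := real_bounds ((P A0).toReal) (G0 y * p0) p0 (1 - cu) (1 - cl) h1cu h1cl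
    (by rw [hb0]; linarith) (by rw [hb0]; linarith)
    (by rw [hb0]; linarith) (by rw [hb0]; linarith)
  have hr1 : ((1:ℝ) - cu) - p0 = p1 - cu := by rw [hp0]; ring
  have hr2 : ((1:ℝ) - cl) - p0 = p1 - cl := by rw [hp0]; ring
  refine ⟨⟨?_, ?_⟩, ⟨?_, ?_⟩⟩
  · rw [hFl1 y]; exact L1
  · rw [hFu1 y]; exact U1
  · rw [hFl0 y, ← hr1]; exact L0
  · rw [hFu0 y, ← hr2]; exact U0
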